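/- arXiv:1107.1051 — 2 statements merged into one kernel-verified Lean document; each statement's English description precedes it below -/
import Mathlib

section
/- Let R be a commutative ring, let d ≥ 3, let a_4, …, a_d ∈ R, and let I be the ideal of R generated by a_4, …, a_d. Suppose x, y, z, x', y', z' ∈ R are such that the residue rows (x̄, ȳ, z̄) and (x̄', ȳ', z̄') are unimodular over R/I and lie in the same E_3(R/I)-orbit. Then the rows (x, y, z, a_4, …, a_d) and (x', y', z', a_4, …, a_d) are unimodular over R and lie in the same E_d(R)-orbit. In particular, there is a well-defined map Um_3(R/I)/E_3(R/I) → Um_d(R)/E_d(R) sending the class of (x̄, ȳ, z̄) to the class of (x, y, z, a_4, …, a_d). -/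
open Matrix Polynomial

/-- Membership in the subgroup `E_n(R)` of `GL_n(R)` generated by the elementary
matrices `1 + r·e_{ij}` (`r ∈ R`, `i ≠ j`).  Since the inverse of an elementary
matrix is again elementary, this subgroup coincides with the multiplicative
closure of the set of elementary matrices. -/
def IsElementary {ι : Type} [DecidableEq ι] [Fintype ι] {R : Type} [CommRing R]
    (M : Matrix ι ι R) : Prop :=
  M ∈ Submonoid.closure
    {A : Matrix ι ι R | ∃ (i j : ι) (r : R), i ≠ j ∧ A = 1 + Matrix.single i j r}

/-- A row `v` of length `n` is unimodular if its entries generate the unit ideal. -/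
def IsUnimodular {R : Type} [CommRing R] {n : ℕ} (v : Fin n → R) : Prop :=
  ∃ w : Fin n → R, ∑ i, v i * w i = 1

/-- Block diagonal sum `M ⊥ N`. -/
def oplus {R : Type} [CommRing R] {a b : ℕ} (M : Matrix (Fin a) (Fin a) R)
    (N : Matrix (Fin b) (Fin b) R) : Matrix (Fin (a + b)) (Fin (a + b)) R :=
  Matrix.reindex finSumFinEquiv finSumFinEquiv (Matrix.fromBlocks M 0 0 N)

/-- Reindexing a square matrix along an equality of sizes. -/
def matCast {R : Type} [CommRing R] {a b : ℕ} (h : a = b)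
    (M : Matrix (Fin a) (Fin a) R) : Matrix (Fin b) (Fin b) R :=
  Matrix.reindex (finCongr h) (finCongr h) M

/-- `ψ_m` : the block diagonal sum of copies of `[[0,1],[-1,0]]` (`m` even). -/
def psi (R : Type) [CommRing R] (m : ℕ) : Matrix (Fin m) (Fin m) R :=
  fun i j =>
    if (i : ℕ) + 1 = (j : ℕ) ∧ (i : ℕ) % 2 = 0 then 1
    else if (j : ℕ) + 1 = (i : ℕ) ∧ (j : ℕ) % 2 = 0 then -1
    else 0

/-- `σ_m` : the block diagonal sum of copies of `[[0,1],[1,0]]` (`m` even). -/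
def sigmaMat (R : Type) [CommRing R] (m : ℕ) : Matrix (Fin m) (Fin m) R :=
  fun i j =>
    if ((i : ℕ) + 1 = (j : ℕ) ∧ (i : ℕ) % 2 = 0) ∨
       ((j : ℕ) + 1 = (i : ℕ) ∧ (j : ℕ) % 2 = 0) then 1
    else 0

/-- The relation `∼` on invertible skew-symmetric matrices: for `G` of size
`2n = a` and `G'` of size `2m = b`, `G ∼ G'` iff there are `t ≥ 0` and an
elementary matrix `E ∈ E_{2(m+n+t)}(R)` with
`G ⊥ ψ_{2(m+t)} = Eᵗ (G' ⊥ ψ_{2(n+t)}) E`. -/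
def WittEquiv {R : Type} [CommRing R] {a b : ℕ} (G : Matrix (Fin a) (Fin a) R)
    (G' : Matrix (Fin b) (Fin b) R) : Prop :=
  ∃ (t : ℕ) (E : Matrix (Fin (a + (b + 2 * t))) (Fin (a + (b + 2 * t))) R),
    IsElementary E ∧
      oplus G (psi R (b + 2 * t)) =
        Eᵀ * matCast (by omega) (oplus G' (psi R (a + 2 * t))) * E

/-- The `4 × 4` invertible skew-symmetric matrix `V(v, w)` associated to a
unimodular row `v` with completion `w` (`v · wᵗ = 1`). -/
def VMat {R : Type} [CommRing R] (v w : Fin 3 → R) : Matrix (Fin 4) (Fin 4) R :=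
  !![0, v 0, v 1, v 2;
     -(v 0), 0, w 2, -(w 1);
     -(v 1), -(w 2), 0, w 0;
     -(v 2), w 1, -(w 0), 0]

/-- `n`-fold orthogonal (block diagonal) sum of a matrix with itself. -/
def oplusIter {R : Type} [CommRing R] {a : ℕ} (M : Matrix (Fin a) (Fin a) R) :
    (n : ℕ) → Matrix (Fin (n * a)) (Fin (n * a)) R
  | 0 => 0
  | n + 1 => matCast (by ring) (oplus M (oplusIter M n))

/-- The stabilization `diag(M, I_{n-d})` of a `d × d` matrix to an `n × n` matrix. -/
def stab {R : Type} [CommRing R] {d n : ℕ} (M : Matrix (Fin d) (Fin d) R) :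
    Matrix (Fin n) (Fin n) R :=
  fun i j =>
    if hi : (i : ℕ) < d then
      if hj : (j : ℕ) < d then M ⟨i, hi⟩ ⟨j, hj⟩ else 0
    else if (i : ℕ) = (j : ℕ) then 1 else 0

section Aux

variable {ι : Type} [DecidableEq ι] [Fintype ι] {R : Type} [CommRing R]

lemma isElementary_one : IsElementary (1 : Matrix ι ι R) := one_mem _

lemma IsElementary.mul {A B : Matrix ι ι R} (hA : IsElementary A) (hB : IsElementary B) :
    IsElementary (A * B) := mul_mem hA hB

lemma isElementary_gen {i j : ι} (h : i ≠ j) (r : R) :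
    IsElementary (1 + Matrix.single i j r) :=
  Submonoid.subset_closure ⟨i, j, r, h, rfl⟩

lemma map_stdBasisMatrix' {S : Type} [CommRing S] (f : R →+* S) (i j : ι) (r : R) :
    (Matrix.single i j r).map f = Matrix.single i j (f r) := by
  ext a b
  simp [Matrix.single, Matrix.map_apply, apply_ite f]

lemma isElementary_lift {S : Type} [CommRing S] (f : R →+* S) (hf : Function.Surjective f)
    {E : Matrix ι ι S} (hE : IsElementary E) :
    ∃ F : Matrix ι ι R, IsElementary F ∧ F.map f = E := by
  refine Submonoid.closure_induction
    (motive := fun X _ => ∃ F : Matrix ι ι R, IsElementary F ∧ F.map f = X) ?_ ?_ ?_ hE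
  · rintro X ⟨i, j, s, hij, rfl⟩
    obtain ⟨r, rfl⟩ := hf s
    refine ⟨1 + Matrix.single i j r, isElementary_gen hij r, ?_⟩
    rw [Matrix.map_add _ (map_add f), Matrix.map_one f f.map_zero f.map_one,
      map_stdBasisMatrix']
  · exact ⟨1, isElementary_one, Matrix.map_one f f.map_zero f.map_one⟩
  · rintro X Y _ _ ⟨F, hF, rfl⟩ ⟨G, hG, rfl⟩
    exact ⟨F * G, hF.mul hG, Matrix.map_mul⟩

lemma oplus_one_one {m k : ℕ} :
    oplus (1 : Matrix (Fin m) (Fin m) R) (1 : Matrix (Fin k) (Fin k) R) = 1 := by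
  unfold oplus
  rw [Matrix.fromBlocks_one]
  simp

lemma oplus_one_mul {m k : ℕ} (A B : Matrix (Fin m) (Fin m) R) :
    oplus A (1 : Matrix (Fin k) (Fin k) R) * oplus B 1 = oplus (A * B) 1 := by
  unfold oplus
  rw [Matrix.reindex_apply, Matrix.reindex_apply, Matrix.reindex_apply,
    Matrix.submatrix_mul_equiv _ _ _ finSumFinEquiv.symm _, Matrix.fromBlocks_multiply]
  simp

lemma oplus_one_gen {m k : ℕ} (i j : Fin m) (r : R) :
    oplus (1 + Matrix.single i j r) (1 : Matrix (Fin k) (Fin k) R) =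
      1 + Matrix.single (Fin.castAdd k i) (Fin.castAdd k j) r := by
  unfold oplus
  ext a b
  obtain ⟨a', rfl⟩ := finSumFinEquiv.surjective a
  obtain ⟨b', rfl⟩ := finSumFinEquiv.surjective b
  rcases a' with i' | i' <;> rcases b' with j' | j' <;>
      simp [Matrix.single, Matrix.one_apply, Fin.ext_iff]
  · rw [if_neg (by omega), if_neg (by omega)]; simp
  · rw [if_neg (by omega), if_neg (by omega)]; simp
  · intro h1 _; exact absurd h1 (by omega)

lemma IsElementary.oplus_one {m k : ℕ} {M : Matrix (Fin m) (Fin m) R}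
    (hM : IsElementary M) :
    IsElementary (oplus M (1 : Matrix (Fin k) (Fin k) R)) := by
  refine Submonoid.closure_induction
    (motive := fun X _ => IsElementary (oplus X (1 : Matrix (Fin k) (Fin k) R))) ?_ ?_ ?_ hM
  · rintro X ⟨i, j, r, hij, rfl⟩
    rw [oplus_one_gen]
    exact isElementary_gen (fun h => hij (Fin.castAdd_injective _ _ h)) r
  · show IsElementary (oplus (1 : Matrix (Fin m) (Fin m) R) (1 : Matrix (Fin k) (Fin k) R))
    rw [oplus_one_one]; exact isElementary_one
  · intro X Y _ _ hX hY
    rw [← oplus_one_mul]; exact hX.mul hY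

lemma append_eq_elim {m k : ℕ} (v : Fin m → R) (a : Fin k → R) :
    Fin.append v a = Sum.elim v a ∘ ⇑finSumFinEquiv.symm := by
  ext x
  obtain ⟨x', rfl⟩ := finSumFinEquiv.surjective x
  rcases x' with i | i <;> simp

lemma vecMul_oplus_one {m k : ℕ} (v : Fin m → R) (a : Fin k → R)
    (M : Matrix (Fin m) (Fin m) R) :
    Fin.append v a ᵥ* oplus M (1 : Matrix (Fin k) (Fin k) R) = Fin.append (v ᵥ* M) a := by
  unfold oplus
  rw [Matrix.reindex_apply, Matrix.submatrix_vecMul_equiv, Matrix.vecMul_fromBlocks]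
  have h1 : Fin.append v a ∘ ⇑finSumFinEquiv.symm.symm = Sum.elim v a := by
    rw [append_eq_elim]; ext x; simp
  rw [h1]
  simp only [Matrix.vecMul_zero, Matrix.vecMul_one, Sum.elim_comp_inl, Sum.elim_comp_inr,
    add_zero, zero_add]
  rw [append_eq_elim]

lemma vecMul_std {n : ℕ} (w : Fin n → R) (i j : Fin n) (r : R) :
    w ᵥ* Matrix.single i j r = fun k => if k = j then w i * r else 0 := by
  ext k
  by_cases h : k = j
  · subst h
    simp [Matrix.vecMul, dotProduct, Matrix.single, mul_ite, eq_comm]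
  · have h2 : ¬ j = k := fun h' => h h'.symm
    simp [Matrix.vecMul, dotProduct, Matrix.single, mul_ite, h, h2]

lemma isElementary_one_add_sum {n : ℕ} {γ : Type} [Fintype γ] [DecidableEq γ]
    (p q : γ → Fin n) (c : γ → R) (hpq : ∀ k l, p k ≠ q l) :
    IsElementary (1 + ∑ k, Matrix.single (p k) (q k) (c k)) := by
  have key : ∀ s : Finset γ,
      IsElementary (1 + ∑ k ∈ s, Matrix.single (p k) (q k) (c k)) := by
    intro s
    induction s using Finset.induction with
    | empty => simpa using (isElementary_one (R := R) (ι := Fin n))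
    | @insert k s hk ih =>
        have h0 : Matrix.single (p k) (q k) (c k) *
            (∑ l ∈ s, Matrix.single (p l) (q l) (c l)) = 0 := by
          rw [Finset.mul_sum]
          refine Finset.sum_eq_zero fun l _ => ?_
          exact Matrix.single_mul_single_of_ne (c k) (p k) (q k) (p l) (fun (h : q k = p l) => hpq l k h.symm) (c l)
        have heq : (1 + ∑ l ∈ insert k s, Matrix.single (p l) (q l) (c l)) =
            (1 + Matrix.single (p k) (q k) (c k)) *
              (1 + ∑ l ∈ s, Matrix.single (p l) (q l) (c l)) := by
          rw [Finset.sum_insert hk, add_mul, one_mul, mul_add, mul_one, h0, add_zero]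
          abel
        rw [heq]
        exact (isElementary_gen (hpq k k) (c k)).mul ih
  exact key Finset.univ

end Aux


lemma unimod_lift {R : Type} [CommRing R] {e : ℕ} (a : Fin e → R)
    (I : Ideal R) (hI : I = Ideal.span (Set.range a)) (v : Fin 3 → R)
    (hu : IsUnimodular (fun i => Ideal.Quotient.mk I (v i))) :
    IsUnimodular (Fin.append v a) := by
  obtain ⟨wb, hw⟩ := hu
  choose w hwl using fun i => Ideal.Quotient.mk_surjective (wb i)
  have hmem : (1 : R) - ∑ i : Fin 3, v i * w i ∈ I := by
    rw [← Ideal.Quotient.eq_zero_iff_mem]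
    simp only [map_sub, _root_.map_one, map_sum, _root_.map_mul, hwl]
    simp only at hw
    rw [hw, sub_self]
  rw [hI, ← Ideal.submodule_span_eq, Submodule.mem_span_range_iff_exists_fun] at hmem
  obtain ⟨c, hc⟩ := hmem
  refine ⟨Fin.append w c, ?_⟩
  rw [Fin.sum_univ_add]
  simp only [Fin.append_left, Fin.append_right]
  have h2 : ∑ i : Fin e, a i * c i = ∑ i : Fin e, c i • a i := by
    simp [smul_eq_mul, mul_comm]
  rw [h2, hc]; ring


/-- Let `I = (a₄, …, a_d)` (here `d = 3 + e` with
`a : Fin e → R` the list of generators).  If the residue rows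
`(x̄, ȳ, z̄)` and `(x̄', ȳ', z̄')` are unimodular over `R/I` and lie in the same
`E₃(R/I)`-orbit, then the rows `(x, y, z, a₄, …, a_d)` and
`(x', y', z', a₄, …, a_d)` are unimodular over `R` and lie in the same
`E_d(R)`-orbit.  In particular the map
`Um₃(R/I)/E₃(R/I) → Um_d(R)/E_d(R)` is well defined. -/
theorem unimodular_lift_orbit
    (R : Type) [CommRing R] (e : ℕ) (a : Fin e → R)
    (I : Ideal R) (hI : I = Ideal.span (Set.range a))
    (x y z x' y' z' : R)
    (hu : IsUnimodular
      ![Ideal.Quotient.mk I x, Ideal.Quotient.mk I y, Ideal.Quotient.mk I z])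
    (hu' : IsUnimodular
      ![Ideal.Quotient.mk I x', Ideal.Quotient.mk I y', Ideal.Quotient.mk I z'])
    (horb : ∃ E : Matrix (Fin 3) (Fin 3) (R ⧸ I), IsElementary E ∧
      ![Ideal.Quotient.mk I x, Ideal.Quotient.mk I y, Ideal.Quotient.mk I z] ᵥ* E =
        ![Ideal.Quotient.mk I x', Ideal.Quotient.mk I y', Ideal.Quotient.mk I z']) :
    IsUnimodular (Fin.append ![x, y, z] a) ∧
    IsUnimodular (Fin.append ![x', y', z'] a) ∧
    ∃ E' : Matrix (Fin (3 + e)) (Fin (3 + e)) R, IsElementary E' ∧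
      (Fin.append ![x, y, z] a) ᵥ* E' = Fin.append ![x', y', z'] a := by

  have hπv : (fun i => Ideal.Quotient.mk I (![x, y, z] i)) =
      ![Ideal.Quotient.mk I x, Ideal.Quotient.mk I y, Ideal.Quotient.mk I z] := by
    funext i; fin_cases i <;> rfl
  have hπv' : (fun i => Ideal.Quotient.mk I (![x', y', z'] i)) =
      ![Ideal.Quotient.mk I x', Ideal.Quotient.mk I y', Ideal.Quotient.mk I z'] := by
    funext i; fin_cases i <;> rfl
  refine ⟨unimod_lift a I hI _ (by rw [hπv]; exact hu),
    unimod_lift a I hI _ (by rw [hπv']; exact hu'), ?_⟩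
  obtain ⟨Ebar, hEbar, hrow⟩ := horb
  obtain ⟨F, hF, hFmap⟩ :=
    isElementary_lift (Ideal.Quotient.mk I) Ideal.Quotient.mk_surjective hEbar
  set u : Fin 3 → R := ![x, y, z] ᵥ* F with hu_def
  have hmapvec : ∀ (i : Fin 3), Ideal.Quotient.mk I (u i) =
      ((fun l => Ideal.Quotient.mk I (![x, y, z] l)) ᵥ*
        F.map (Ideal.Quotient.mk I)) i := by
    intro i
    simp [hu_def, Matrix.vecMul, dotProduct, map_sum]
  have hcoord : ∀ i, Ideal.Quotient.mk I (u i) =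
      ![Ideal.Quotient.mk I x', Ideal.Quotient.mk I y', Ideal.Quotient.mk I z'] i := by
    intro i
    rw [hmapvec i, hπv, hFmap, hrow]
  have hdiff : ∀ i, ∃ c : Fin e → R, ∑ j, c j • a j = ![x', y', z'] i - u i := by
    intro i
    rw [← Submodule.mem_span_range_iff_exists_fun, Ideal.submodule_span_eq, ← hI,
      ← Ideal.Quotient.eq_zero_iff_mem, map_sub, sub_eq_zero, hcoord i,
      ← congrFun hπv' i]
  choose c hc using hdiff
  have hT : IsElementary (1 + ∑ kj : Fin 3 × Fin e,
      Matrix.single (Fin.natAdd 3 kj.2) (Fin.castAdd e kj.1) (c kj.1 kj.2)) := by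
    refine isElementary_one_add_sum _ _ _ ?_
    intro k l
    simp only [ne_eq, Fin.ext_iff, Fin.coe_natAdd, Fin.coe_castAdd]
    omega
  refine ⟨oplus F 1 * _, hF.oplus_one.mul hT, ?_⟩
  rw [← Matrix.vecMul_vecMul, vecMul_oplus_one]
  rw [Matrix.vecMul_add, Matrix.vecMul_one]
  have hsum : Fin.append u a ᵥ* (∑ kj : Fin 3 × Fin e,
      Matrix.single (Fin.natAdd 3 kj.2) (Fin.castAdd e kj.1) (c kj.1 kj.2)) =
      ∑ kj : Fin 3 × Fin e, Fin.append u a ᵥ*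
        Matrix.single (Fin.natAdd 3 kj.2) (Fin.castAdd e kj.1) (c kj.1 kj.2) :=
    map_sum (AddMonoidHom.mk' (fun M : Matrix (Fin (3 + e)) (Fin (3 + e)) R => Fin.append u a ᵥ* M)
      (fun M N => Matrix.vecMul_add M N (Fin.append u a))) _ _
  rw [hsum]
  refine funext (Fin.addCases ?_ ?_)
  · intro i
    simp only [Pi.add_apply, Finset.sum_apply, vecMul_std, Fin.append_left,
      Fin.append_right, Fintype.sum_prod_type, Fin.castAdd_inj]
    rw [Finset.sum_comm]
    simp only [Finset.sum_ite_eq, Finset.mem_univ, if_true]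
    have h3 : ∑ k2 : Fin e, a k2 * c i k2 = ![x', y', z'] i - u i := by
      rw [← hc i]
      simp [smul_eq_mul, mul_comm]
    rw [h3, ← hu_def]; ring
  · intro j
    simp only [Pi.add_apply, Finset.sum_apply, vecMul_std, Fin.append_right]
    have h4 : ∀ kj : Fin 3 × Fin e,
        (if Fin.natAdd 3 j = Fin.castAdd e kj.1 then
          a kj.2 * c kj.1 kj.2 else 0) = 0 := by
      intro kj
      rw [if_neg]
      simp only [Fin.ext_iff, Fin.coe_natAdd, Fin.coe_castAdd]
      omega
    simp only [h4, Finset.sum_const_zero, add_zero]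
end

section
/- Let R be a commutative ring with 2 invertible and let G ∈ GL_{2n}(R) be such that Gᵗψ_{2n}G ∼ ψ_2. Then there exist s ≥ 0 and E ∈ E_{2(n+s)}(R) such that (G ⊥ I_{2s})·E is symplectic, i.e., ((G ⊥ I_{2s})E)ᵗ ψ_{2(n+s)} ((G ⊥ I_{2s})E) = ψ_{2(n+s)}. (Exactness at K_1(R) of the sequence K_1Sp(R) → K_1(R) → W'_E(R): if η(G) is trivial then the class of G comes from a symplectic matrix.) -/
open Matrix Polynomial

section AuxLemmas

variable {R : Type} [CommRing R] {a b b' : ℕ} {ι : Type} [DecidableEq ι] [Fintype ι]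

lemma matCast_rfl (M : Matrix (Fin a) (Fin a) R) : matCast rfl M = M := by
  simp [matCast]

lemma matCast_mul (h : a = b) (M N : Matrix (Fin a) (Fin a) R) :
    matCast h (M * N) = matCast h M * matCast h N := by
  subst h; simp [matCast_rfl]

lemma matCast_transpose (h : a = b) (M : Matrix (Fin a) (Fin a) R) :
    matCast h Mᵀ = (matCast h M)ᵀ := by subst h; simp [matCast_rfl]

lemma matCast_one (h : a = b) : matCast h (1 : Matrix (Fin a) (Fin a) R) = 1 := by
  subst h; simp [matCast_rfl]

lemma matCast_psi (h : a = b) : matCast h (psi R a) = psi R b := by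
  subst h; simp [matCast_rfl]

lemma oplus_mul (M M' : Matrix (Fin a) (Fin a) R) (N N' : Matrix (Fin b) (Fin b) R) :
    oplus M N * oplus M' N' = oplus (M * M') (N * N') := by
  simp [oplus, Matrix.reindex_apply, Matrix.submatrix_mul_equiv, Matrix.fromBlocks_multiply]

lemma oplus_transpose (M : Matrix (Fin a) (Fin a) R) (N : Matrix (Fin b) (Fin b) R) :
    (oplus M N)ᵀ = oplus Mᵀ Nᵀ := by
  simp [oplus, Matrix.reindex_apply, Matrix.transpose_submatrix, Matrix.fromBlocks_transpose]

lemma matCast_oplus (hb : b = b') (h : a + b = a + b') (M : Matrix (Fin a) (Fin a) R)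
    (N : Matrix (Fin b) (Fin b) R) :
    matCast h (oplus M N) = oplus M (matCast hb N) := by
  subst hb; simp [matCast_rfl]

lemma finSumFinEquiv_symm_eq (i : Fin (a + b)) :
    finSumFinEquiv.symm i = if h : (i : ℕ) < a then Sum.inl ⟨i, h⟩
      else Sum.inr ⟨(i : ℕ) - a, by omega⟩ := by
  split_ifs with h
  · have hh : i = Fin.castAdd b ⟨i, h⟩ := by ext; simp
    conv_lhs => rw [hh]
    exact finSumFinEquiv_symm_apply_castAdd _
  · have hh : i = Fin.natAdd a ⟨(i : ℕ) - a, by omega⟩ := by ext; simp; omega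
    conv_lhs => rw [hh]
    exact finSumFinEquiv_symm_apply_natAdd _

lemma oplus_apply (M : Matrix (Fin a) (Fin a) R) (N : Matrix (Fin b) (Fin b) R)
    (i j : Fin (a + b)) :
    oplus M N i j =
      if hi : (i : ℕ) < a then
        (if hj : (j : ℕ) < a then M ⟨i, hi⟩ ⟨j, hj⟩ else 0)
      else
        (if hj : (j : ℕ) < a then 0
         else N ⟨(i : ℕ) - a, by omega⟩ ⟨(j : ℕ) - a, by omega⟩) := by
  have hh : oplus M N i j =
      Matrix.fromBlocks M 0 0 N (finSumFinEquiv.symm i) (finSumFinEquiv.symm j) := rfl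
  rw [hh, finSumFinEquiv_symm_eq, finSumFinEquiv_symm_eq]
  split_ifs <;> rfl

lemma psi_oplus (ha : a % 2 = 0) : oplus (psi R a) (psi R b) = psi R (a + b) := by
  ext i j
  rw [oplus_apply]
  have hi := i.isLt; have hj := j.isLt
  split_ifs with h1 h2 h2 <;> simp only [psi] <;> split_ifs <;> first | rfl | omega

lemma isElementary_inv {M : Matrix ι ι R} (hM : IsElementary M) :
    ∃ N : Matrix ι ι R, IsElementary N ∧ M * N = 1 ∧ N * M = 1 := by
  induction hM using Submonoid.closure_induction with
  | mem A hA =>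
    obtain ⟨i, j, r, hij, rfl⟩ := hA
    refine ⟨1 + Matrix.single i j (-r),
      Submonoid.subset_closure ⟨i, j, -r, hij, rfl⟩, ?_, ?_⟩ <;>
    · have h0 : Matrix.single i j (r : R) * Matrix.single i j (-r) = 0 :=
        Matrix.single_mul_single_of_ne (c := r) i j i (Ne.symm hij) (-r)
      have h0' : Matrix.single i j (-r : R) * Matrix.single i j r = 0 :=
        Matrix.single_mul_single_of_ne (c := -r) i j i (Ne.symm hij) r
      simp only [add_mul, mul_add, h0, h0', one_mul, mul_one, add_zero]
      rw [add_assoc, ← Matrix.single_add]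
      simp
  | one => exact ⟨1, Submonoid.one_mem _, by simp, by simp⟩
  | mul A B _ _ ihA ihB =>
    obtain ⟨A', hA', hA1, hA2⟩ := ihA
    obtain ⟨B', hB', hB1, hB2⟩ := ihB
    refine ⟨B' * A', Submonoid.mul_mem _ hB' hA', ?_, ?_⟩
    · rw [mul_assoc, ← mul_assoc B, hB1, one_mul, hA1]
    · rw [mul_assoc, ← mul_assoc A', hA2, one_mul, hB2]

lemma isElementary_matCast (h : a = b) {M : Matrix (Fin a) (Fin a) R}
    (hM : IsElementary M) : IsElementary (matCast h M) := by
  subst h; rwa [matCast_rfl]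

end AuxLemmas

/-- exactness at `K₁(R)` in Proposition `exactII`. If
`Gᵗψ_{2n}G ∼ ψ₂`, then there are `s ≥ 0` and an elementary matrix
`E ∈ E_{2(n+s)}(R)` such that `(G ⊥ I_{2s})·E` is symplectic. -/
theorem eta_trivial_implies_symplectic
    (R : Type) [CommRing R] (h2 : IsUnit (2 : R)) (n : ℕ)
    (G : Matrix (Fin (2 * n)) (Fin (2 * n)) R) (hG : IsUnit G.det)
    (hW : WittEquiv (Gᵀ * psi R (2 * n) * G) (psi R 2)) :
    ∃ (s : ℕ) (E : Matrix (Fin (2 * n + 2 * s)) (Fin (2 * n + 2 * s)) R),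
      IsElementary E ∧
        (oplus G (1 : Matrix (Fin (2 * s)) (Fin (2 * s)) R) * E)ᵀ *
            psi R (2 * n + 2 * s) *
            (oplus G (1 : Matrix (Fin (2 * s)) (Fin (2 * s)) R) * E) =
          psi R (2 * n + 2 * s) := by
  obtain ⟨t, E, hE, heq⟩ := hW
  rw [psi_oplus (show (2 : ℕ) % 2 = 0 by norm_num), matCast_psi] at heq
  have hsand : oplus (Gᵀ * psi R (2 * n) * G) (psi R (2 + 2 * t)) =
      (oplus G (1 : Matrix (Fin (2 + 2 * t)) (Fin (2 + 2 * t)) R))ᵀ *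
        psi R (2 * n + (2 + 2 * t)) *
        oplus G (1 : Matrix (Fin (2 + 2 * t)) (Fin (2 + 2 * t)) R) := by
    rw [← psi_oplus (show (2 * n) % 2 = 0 by omega), oplus_transpose, oplus_mul, oplus_mul,
      Matrix.transpose_one, one_mul, mul_one]
  rw [hsand] at heq
  set K := oplus G (1 : Matrix (Fin (2 + 2 * t)) (Fin (2 + 2 * t)) R) with hKdef
  obtain ⟨F, hF, hEF, hFE⟩ := isElementary_inv hE
  set ψ := psi R (2 * n + (2 + 2 * t)) with hψdef
  have key : (K * F)ᵀ * ψ * (K * F) = ψ := by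
    rw [Matrix.transpose_mul]
    have h1 : Fᵀ * Kᵀ * ψ * (K * F) = Fᵀ * (Kᵀ * ψ * K) * F := by
      simp only [mul_assoc]
    rw [h1, heq]
    have h2 : Fᵀ * (Eᵀ * ψ * E) * F = (E * F)ᵀ * ψ * (E * F) := by
      rw [Matrix.transpose_mul]; simp only [mul_assoc]
    rw [h2, hEF]
    simp
  have h' : 2 * n + (2 + 2 * t) = 2 * n + 2 * (1 + t) := by ring
  have hb : 2 + 2 * t = 2 * (1 + t) := by ring
  refine ⟨1 + t, matCast h' F, isElementary_matCast h' hF, ?_⟩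
  have hK : matCast h' K = oplus G (1 : Matrix (Fin (2 * (1 + t))) (Fin (2 * (1 + t))) R) := by
    rw [hKdef, matCast_oplus hb h', matCast_one]
  rw [← hK, ← matCast_psi h', ← matCast_mul, ← matCast_transpose, ← matCast_mul, ← matCast_mul,
    key]
end
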